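/- Let a > b > 0 with a² > 2b², c² = a² − b², and |u| < (a/c²)·√(a² − 2b²). Define the four vertices of the self-intersected 4-periodic as P₁ = (a·u, b·√(1−u²)), P₃ = (−a·u, b·√(1−u²)), P₂,₄ = (∓(a/(c²√(1−u²)))·√(a²(a²−2b²) − c⁴u²), −b³/(c²√(1−u²))). Then the six points P₁, P₂, P₃, P₄, (c, 0), (−c, 0) all lie on the circle centered at C = (0, (c²u² − a² + 2b²)/(2b√(1−u²))) with radius R = (a² − c²u²)/(2b√(1−u²)). -/

import Mathlib

/-- Euclidean distance between two points of the plane `ℝ × ℝ`. -/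
noncomputable def edist' (p q : ℝ × ℝ) : ℝ :=
  Real.sqrt ((p.1 - q.1)^2 + (p.2 - q.2)^2)

lemma edist'_eq_of_sq (p q : ℝ × ℝ) (R : ℝ) (hR : 0 ≤ R)
    (h : (p.1 - q.1)^2 + (p.2 - q.2)^2 = R^2) : edist' p q = R := by
  rw [edist', h]; exact Real.sqrt_sq hR

set_option maxHeartbeats 1600000 in
/-- The vertices of the self-intersected 4-periodic are concyclic with the two foci
`(±c, 0)` on the circle of center `C = (0, (c²u²−a²+2b²)/(2b√(1−u²)))` and radius
`R = (a²−c²u²)/(2b√(1−u²))`. -/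
theorem self_intersected_4periodic_concyclic_with_foci
    (a b c u : ℝ) (hab : a > b) (hb : b > 0) (h2 : a^2 > 2*b^2)
    (hc : c > 0) (hc2 : c^2 = a^2 - b^2)
    (hu : |u| < (a / c^2) * Real.sqrt (a^2 - 2*b^2)) :
    let s := Real.sqrt (1 - u^2)
    let w := Real.sqrt (a^2*(a^2 - 2*b^2) - c^4*u^2)
    let P1 : ℝ × ℝ := (a*u, b*s)
    let P3 : ℝ × ℝ := (-(a*u), b*s)
    let P2 : ℝ × ℝ := (-((a/(c^2*s))*w), -(b^3/(c^2*s)))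
    let P4 : ℝ × ℝ := ((a/(c^2*s))*w, -(b^3/(c^2*s)))
    let C : ℝ × ℝ := (0, (c^2*u^2 - a^2 + 2*b^2)/(2*b*s))
    let R := (a^2 - c^2*u^2)/(2*b*s)
    edist' P1 C = R ∧ edist' P2 C = R ∧ edist' P3 C = R ∧ edist' P4 C = R ∧
      edist' ((c, 0) : ℝ × ℝ) C = R ∧ edist' ((-c, 0) : ℝ × ℝ) C = R := by
  have hc2pos : (0:ℝ) < c^2 := by positivity
  have hA : (0:ℝ) ≤ a^2 - 2*b^2 := by linarith
  have ha : 0 < a := by nlinarith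
  have hsq : u^2 < (a/c^2)^2 * (a^2 - 2*b^2) := by
    have h := mul_self_lt_mul_self (abs_nonneg u) hu
    have h1 : abs u * abs u = u^2 := by rw [abs_mul_abs_self]; ring
    have h2' : (a / c^2 * Real.sqrt (a^2 - 2*b^2)) * (a / c^2 * Real.sqrt (a^2 - 2*b^2))
        = (a/c^2)^2 * (a^2 - 2*b^2) := by
      have := Real.mul_self_sqrt hA
      nlinarith [this]
    rw [h1, h2'] at h; exact h
  have hsq' : c^4 * u^2 < a^2 * (a^2 - 2*b^2) := by
    have h := mul_lt_mul_of_pos_left hsq (by positivity : (0:ℝ) < c^4)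
    calc c^4 * u^2 < c^4 * ((a/c^2)^2 * (a^2 - 2*b^2)) := h
    _ = a^2 * (a^2 - 2*b^2) := by field_simp
  have hc4 : c^4 = (a^2 - b^2)^2 := by rw [show c^4 = (c^2)^2 by ring, hc2]
  have hu2 : u^2 < 1 := by nlinarith [hsq', hc4, pow_pos hb 4, pow_pos hc 4]
  intro s w P1 P3 P2 P4 C R
  have hs : 0 < s := Real.sqrt_pos.2 (by linarith)
  have hs2 : s^2 = 1 - u^2 := Real.sq_sqrt (by linarith)
  have hw2 : w^2 = a^2*(a^2 - 2*b^2) - c^4*u^2 := Real.sq_sqrt (by linarith)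
  have hR : 0 ≤ R := by
    have : 0 < a^2 - c^2*u^2 := by nlinarith
    simp only [R]; positivity
  have hsne : s ≠ 0 := ne_of_gt hs
  have hbne : b ≠ 0 := ne_of_gt hb
  have hcne : c ≠ 0 := ne_of_gt hc
  refine ⟨edist'_eq_of_sq _ _ _ hR ?_, edist'_eq_of_sq _ _ _ hR ?_,
    edist'_eq_of_sq _ _ _ hR ?_, edist'_eq_of_sq _ _ _ hR ?_,
    edist'_eq_of_sq _ _ _ hR ?_, edist'_eq_of_sq _ _ _ hR ?_⟩ <;>
      simp only [P1, P2, P3, P4, C, R] <;> field_simp <;> ring_nf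
  · linear_combination ((-4)*b^2*c^2*u^2 + (-4)*b^4 + (4)*b^4*s^2 + (-4)*b^4*u^2 + (4)*a^2*b^2 + (4)*a^2*b^2*u^2) * hs2 + ((4)*b^2*u^4) * hc2
  · linear_combination (4*a^2*b^2) * hw2 + (4*b^2*(c^4*u^2 - (a^2-b^2)*(c^2+a^2-b^2) - b^2*(a^2-2*b^2))) * hc2
  · linear_combination ((-4)*b^2*c^2*u^2 + (-4)*b^4 + (4)*b^4*s^2 + (-4)*b^4*u^2 + (4)*a^2*b^2 + (4)*a^2*b^2*u^2) * hs2 + ((4)*b^2*u^4) * hc2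
  · linear_combination (4*a^2*b^2) * hw2 + (4*b^2*(c^4*u^2 - (a^2-b^2)*(c^2+a^2-b^2) - b^2*(a^2-2*b^2))) * hc2
  · linear_combination ((4)*b^2*c^2) * hs2 + ((4)*b^2) * hc2
  · linear_combination ((4)*b^2*c^2) * hs2 + ((4)*b^2) * hc2
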